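/- Let G be a finite graph with loops at all vertices, and let H be obtained from G by deleting a single edge uv (u ≠ v). Then the strict domination numbers satisfy -4 ≤ γ(G) - γ(H) ≤ 2, where γ(G) = min { f(V) : f is a strictly majoritarian opinion function on G }. -/

import Mathlib

open scoped Classical
open Finset

/-- Sum of opinions over the closed neighborhood of `v` (closed since every
vertex has a loop, so `v` itself is counted). -/
noncomputable def nbrSum {V : Type*} [Fintype V] (G : SimpleGraph V) (f : V → ℤ) (v : V) : ℤ :=
  ∑ w ∈ univ.filter (fun w => G.Adj v w ∨ w = v), f w

/-- `f` is an opinion function: every value is `1` or `-1`. -/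
def IsOpinion {V : Type*} (f : V → ℤ) : Prop := ∀ v, f v = 1 ∨ f v = -1

/-- The set of vertices voting 'yes'. -/
noncomputable def yesVoters {V : Type*} [Fintype V] (G : SimpleGraph V) (f : V → ℤ) : Finset V :=
  univ.filter (fun v => 0 < nbrSum G f v)

/-- `f` is strictly majoritarian on `G`: more than `|V|/2` vertices vote 'yes'. -/
def Majoritarian {V : Type*} [Fintype V] (G : SimpleGraph V) (f : V → ℤ) : Prop :=
  Fintype.card V < 2 * (yesVoters G f).card

/-- The strict domination number: minimum of `f(V)` over strictly majoritarian
opinion functions. -/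
noncomputable def gamma {V : Type*} [Fintype V] (G : SimpleGraph V) : ℤ :=
  sInf {t : ℤ | ∃ f : V → ℤ, IsOpinion f ∧ Majoritarian G f ∧ t = ∑ v, f v}

section Aux

variable {V : Type*} [Fintype V]

/-- The gamma set of a graph. -/
def gammaSet (K : SimpleGraph V) : Set ℤ :=
  {t : ℤ | ∃ f : V → ℤ, IsOpinion f ∧ Majoritarian K f ∧ t = ∑ v, f v}

lemma gamma_eq (K : SimpleGraph V) : gamma K = sInf (gammaSet K) := rfl

lemma opinion_le_one {f : V → ℤ} (hf : IsOpinion f) (a : V) : f a ≤ 1 := by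
  rcases hf a with h | h <;> omega

lemma neg_one_le_opinion {f : V → ℤ} (hf : IsOpinion f) (a : V) : -1 ≤ f a := by
  rcases hf a with h | h <;> omega

lemma nbrSum_mono (K : SimpleGraph V) {f g : V → ℤ} (h : ∀ a, f a ≤ g a) (w : V) :
    nbrSum K f w ≤ nbrSum K g w :=
  Finset.sum_le_sum (fun i _ => h i)

lemma nbrSum_update (K : SimpleGraph V) (f : V → ℤ) (x w : V) :
    nbrSum K (Function.update f x 1) w =
      nbrSum K f w + (if K.Adj w x ∨ x = w then 1 - f x else 0) := by
  unfold nbrSum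
  by_cases hx : K.Adj w x ∨ x = w
  · rw [if_pos hx]
    have hxmem : x ∈ univ.filter (fun y => K.Adj w y ∨ y = w) := by
      simp [hx]
    rw [Finset.sum_update_of_mem hxmem, Finset.sdiff_singleton_eq_erase,
      ← Finset.add_sum_erase _ f hxmem]
    ring
  · rw [if_neg hx, add_zero]
    apply Finset.sum_congr rfl
    intro y hy
    rw [Function.update_apply, if_neg]
    rintro rfl
    exact hx (by simpa using hy)

lemma sum_update_opinion {f : V → ℤ} (x : V) (hx : f x = -1) :
    (∑ a, Function.update f x 1 a) = (∑ a, f a) + 2 := by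
  rw [Finset.sum_update_of_mem (mem_univ x), Finset.sdiff_singleton_eq_erase,
    ← Finset.add_sum_erase _ f (mem_univ x), hx]
  ring

lemma maj_transfer (K1 K2 : SimpleGraph V) (f g : V → ℤ)
    (h : ∀ w, 0 < nbrSum K1 f w → 0 < nbrSum K2 g w)
    (hm : Majoritarian K1 f) : Majoritarian K2 g := by
  unfold Majoritarian yesVoters at *
  refine lt_of_lt_of_le hm (Nat.mul_le_mul_left 2 (Finset.card_le_card ?_))
  intro w hw
  simp only [mem_filter, mem_univ, true_and] at *
  exact h w hw

lemma gammaSet_nonempty [Nonempty V] (K : SimpleGraph V) : (gammaSet K).Nonempty := by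
  refine ⟨∑ v : V, (1 : ℤ), fun _ => 1, fun _ => Or.inl rfl, ?_, rfl⟩
  have hyes : yesVoters K (fun _ => (1 : ℤ)) = univ := by
    ext w
    simp only [yesVoters, mem_filter, mem_univ, true_and, iff_true]
    have : nbrSum K (fun _ => (1 : ℤ)) w =
        ((univ.filter (fun y => K.Adj w y ∨ y = w)).card : ℤ) := by
      simp [nbrSum]
    rw [this]
    have : 0 < (univ.filter (fun y => K.Adj w y ∨ y = w)).card :=
      Finset.card_pos.mpr ⟨w, by simp⟩
    exact_mod_cast this
  unfold Majoritarian
  rw [hyes, Finset.card_univ]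
  have : 0 < Fintype.card V := Fintype.card_pos
  omega

lemma gammaSet_bddBelow (K : SimpleGraph V) : BddBelow (gammaSet K) := by
  refine ⟨-(Fintype.card V : ℤ), ?_⟩
  rintro t ⟨f, hf, _, rfl⟩
  have h1 : ∑ _a : V, (-1 : ℤ) ≤ ∑ a, f a :=
    Finset.sum_le_sum (fun a _ => neg_one_le_opinion hf a)
  simpa [Finset.card_univ] using h1

lemma gamma_mem [Nonempty V] (K : SimpleGraph V) : gamma K ∈ gammaSet K :=
  Int.csInf_mem (gammaSet_nonempty K) (gammaSet_bddBelow K)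

lemma gamma_le (K : SimpleGraph V) {t : ℤ} (ht : t ∈ gammaSet K) : gamma K ≤ t :=
  csInf_le (gammaSet_bddBelow K) ht

/-- One-flip fixer: either `w` already has nonneg... if the closed nbhd sum at `w`
is nonnegative, we can flip at most one vertex (cost 2) to make it positive. -/
lemma fix (K : SimpleGraph V) (f : V → ℤ) (hf : IsOpinion f) (w : V) :
    ∃ g : V → ℤ, IsOpinion g ∧ (∀ a, f a ≤ g a) ∧ (∑ a, g a) ≤ (∑ a, f a) + 2 ∧
      (0 ≤ nbrSum K f w → 0 < nbrSum K g w) := by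
  by_cases h : 0 < nbrSum K f w
  · exact ⟨f, hf, fun a => le_refl _, by omega, fun _ => h⟩
  · push_neg at h
    have hex : ∃ x, (K.Adj w x ∨ x = w) ∧ f x = -1 := by
      by_contra hno
      push_neg at hno
      have hall : ∀ x ∈ univ.filter (fun y => K.Adj w y ∨ y = w), f x = 1 := by
        intro x hx
        rcases hf x with h1 | h1
        · exact h1
        · exact absurd h1 (hno x (by simpa using hx))
      have hsum : nbrSum K f w =
          ((univ.filter (fun y => K.Adj w y ∨ y = w)).card : ℤ) := by
        unfold nbrSum
        rw [Finset.sum_congr rfl hall]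
        simp
      have hpos : 0 < (univ.filter (fun y => K.Adj w y ∨ y = w)).card :=
        Finset.card_pos.mpr ⟨w, by simp⟩
      rw [hsum] at h
      exact absurd h (by exact_mod_cast Nat.not_le.mpr hpos)
    obtain ⟨x, hx, hfx⟩ := hex
    refine ⟨Function.update f x 1, ?_, ?_, ?_, ?_⟩
    · intro a
      rw [Function.update_apply]
      split
      · exact Or.inl rfl
      · exact hf a
    · intro a
      rw [Function.update_apply]
      split_ifs with hax
      · subst hax; omega
      · exact le_refl _
    · rw [sum_update_opinion x hfx]
    · intro h0
      have heq : nbrSum K f w = 0 := le_antisymm h h0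
      rw [nbrSum_update, if_pos hx, hfx, heq]
      norm_num

lemma nbrSum_delete (K : SimpleGraph V) {u v : V} (huv : u ≠ v) (hadj : K.Adj u v)
    (f : V → ℤ) :
    nbrSum K f u = nbrSum (K.deleteEdges {s(u, v)}) f u + f v := by
  unfold nbrSum
  have hset : univ.filter (fun y => (K.deleteEdges {s(u, v)}).Adj u y ∨ y = u) =
      (univ.filter (fun y => K.Adj u y ∨ y = u)).erase v := by
    ext x
    simp only [mem_filter, mem_univ, true_and, Finset.mem_erase,
      SimpleGraph.deleteEdges_adj, Set.mem_singleton_iff, Sym2.eq_iff]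
    by_cases hx : x = v <;> simp_all <;> exact Ne.symm huv
  have hv : v ∈ univ.filter (fun y => K.Adj u y ∨ y = u) := by simp [hadj]
  rw [← Finset.add_sum_erase _ f hv, add_comm]
  refine congrArg (· + f v) (Finset.sum_congr ?_ (fun _ _ => rfl))
  convert hset.symm using 2

lemma nbrSum_delete' (K : SimpleGraph V) {u v : V} (huv : u ≠ v) (hadj : K.Adj u v)
    (f : V → ℤ) :
    nbrSum K f v = nbrSum (K.deleteEdges {s(u, v)}) f v + f u := by
  have h := nbrSum_delete K huv.symm hadj.symm f
  rwa [show ({s(v, u)} : Set (Sym2 V)) = {s(u, v)} by rw [Sym2.eq_swap]] at h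

lemma nbrSum_delete_other (K : SimpleGraph V) {u v w : V} (hwu : w ≠ u) (hwv : w ≠ v)
    (f : V → ℤ) :
    nbrSum (K.deleteEdges {s(u, v)}) f w = nbrSum K f w := by
  unfold nbrSum
  congr 1
  ext x
  simp only [mem_filter, mem_univ, true_and, SimpleGraph.deleteEdges_adj,
    Set.mem_singleton_iff, Sym2.eq_iff]
  constructor
  · tauto
  · rintro (ha | rfl)
    · exact Or.inl ⟨ha, by rintro (⟨h1, -⟩ | ⟨h1, -⟩) <;> [exact hwu h1; exact hwv h1]⟩
    · exact Or.inr rfl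

end Aux

theorem stmt1 {V : Type*} [Fintype V] [Nonempty V] (G : SimpleGraph V) (u v : V)
    (huv : u ≠ v) (hadj : G.Adj u v) :
    -4 ≤ gamma G - gamma (G.deleteEdges {s(u, v)}) ∧
      gamma G - gamma (G.deleteEdges {s(u, v)}) ≤ 2 := by
  set H := G.deleteEdges {s(u, v)} with hH
  -- Lower bound: gamma H ≤ gamma G + 4
  have hlow : gamma H ≤ gamma G + 4 := by
    obtain ⟨f, hf, hmaj, hsum⟩ := gamma_mem G
    obtain ⟨g1, hg1op, hfg1, hg1sum, hg1fix⟩ := fix H f hf u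
    obtain ⟨g2, hg2op, hg1g2, hg2sum, hg2fix⟩ := fix H g1 hg1op v
    have hfg2 : ∀ a, f a ≤ g2 a := fun a => le_trans (hfg1 a) (hg1g2 a)
    have hkey : ∀ w, 0 < nbrSum G f w → 0 < nbrSum H g2 w := by
      intro w hw
      by_cases hwu : w = u
      · rw [hwu] at hw ⊢
        have h1 : nbrSum G f u = nbrSum H f u + f v := nbrSum_delete G huv hadj f
        have h2 : 0 ≤ nbrSum H f u := by
          have := opinion_le_one hf v
          omega
        have h3 : 0 < nbrSum H g1 u := hg1fix h2
        exact lt_of_lt_of_le h3 (nbrSum_mono H hg1g2 u)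
      · by_cases hwv : w = v
        · rw [hwv] at hw ⊢
          have h1 : nbrSum G f v = nbrSum H f v + f u := nbrSum_delete' G huv hadj f
          have h2 : 0 ≤ nbrSum H f v := by
            have := opinion_le_one hf u
            omega
          have h3 : 0 ≤ nbrSum H g1 v := le_trans h2 (nbrSum_mono H hfg1 v)
          exact hg2fix h3
        · have h1 : nbrSum H f w = nbrSum G f w := nbrSum_delete_other G hwu hwv f
          have h2 : nbrSum H f w ≤ nbrSum H g2 w := nbrSum_mono H hfg2 w
          omega
    have hmem : (∑ a, g2 a) ∈ gammaSet H := by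
      exact ⟨g2, hg2op, maj_transfer G H f g2 hkey hmaj, rfl⟩
    have := gamma_le H hmem
    omega
  -- Upper bound: gamma G ≤ gamma H + 2
  have hup : gamma G ≤ gamma H + 2 := by
    obtain ⟨f, hf, hmaj, hsum⟩ := gamma_mem H
    -- choose g: flip u if f u = -1, else flip v if f v = -1, else f
    have main : ∃ g : V → ℤ, IsOpinion g ∧ (∑ a, g a) ≤ (∑ a, f a) + 2 ∧
        (∀ w, nbrSum H f w ≤ nbrSum G g w) := by
      have hGu : ∀ g : V → ℤ, nbrSum G g u = nbrSum H g u + g v :=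
        fun g => nbrSum_delete G huv hadj g
      have hGv : ∀ g : V → ℤ, nbrSum G g v = nbrSum H g v + g u :=
        fun g => nbrSum_delete' G huv hadj g
      by_cases h1 : f u = -1
      · refine ⟨Function.update f u 1, ?_, ?_, ?_⟩
        · intro a
          rw [Function.update_apply]
          split
          · exact Or.inl rfl
          · exact hf a
        · rw [sum_update_opinion u h1]
        · intro w
          have hmono : ∀ a, f a ≤ Function.update f u 1 a := by
            intro a
            rw [Function.update_apply]
            split_ifs with hax
            · subst hax; omega
            · exact le_refl _
          by_cases hwu : w = u
          · rw [hwu, hGu]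
            have h2 : nbrSum H (Function.update f u 1) u =
                nbrSum H f u + (if H.Adj u u ∨ u = u then 1 - f u else 0) :=
              by convert nbrSum_update H f u u
            rw [if_pos (Or.inr rfl), h1] at h2
            have h3 : Function.update f u 1 v = f v := by
              rw [Function.update_apply, if_neg (Ne.symm huv)]
            have h4 := neg_one_le_opinion hf v
            omega
          · by_cases hwv : w = v
            · rw [hwv, hGv]
              have h2 : nbrSum H f v ≤ nbrSum H (Function.update f u 1) v :=
                nbrSum_mono H hmono v
              have h3 : Function.update f u 1 u = 1 := by simp
              omega
            · calc nbrSum H f w = nbrSum G f w := nbrSum_delete_other G hwu hwv f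
                _ ≤ nbrSum G (Function.update f u 1) w := nbrSum_mono G hmono w
      · have h1' : f u = 1 := (hf u).resolve_right h1
        by_cases h2 : f v = -1
        · refine ⟨Function.update f v 1, ?_, ?_, ?_⟩
          · intro a
            rw [Function.update_apply]
            split
            · exact Or.inl rfl
            · exact hf a
          · rw [sum_update_opinion v h2]
          · intro w
            have hmono : ∀ a, f a ≤ Function.update f v 1 a := by
              intro a
              rw [Function.update_apply]
              split_ifs with hax
              · subst hax; omega
              · exact le_refl _
            by_cases hwv : w = v
            · rw [hwv, hGv]
              have h3 : nbrSum H (Function.update f v 1) v =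
                  nbrSum H f v + (if H.Adj v v ∨ v = v then 1 - f v else 0) :=
                by convert nbrSum_update H f v v
              rw [if_pos (Or.inr rfl), h2] at h3
              have h4 : Function.update f v 1 u = f u := by
                rw [Function.update_apply, if_neg huv]
              have h5 : f u = 1 := h1'
              omega
            · by_cases hwu : w = u
              · rw [hwu, hGu]
                have h3 : nbrSum H f u ≤ nbrSum H (Function.update f v 1) u :=
                  nbrSum_mono H hmono u
                have h4 : Function.update f v 1 v = 1 := by simp
                omega
              · calc nbrSum H f w = nbrSum G f w := nbrSum_delete_other G hwu hwv f
                  _ ≤ nbrSum G (Function.update f v 1) w := nbrSum_mono G hmono w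
        · have h2' : f v = 1 := (hf v).resolve_right h2
          refine ⟨f, hf, by omega, ?_⟩
          intro w
          by_cases hwu : w = u
          · rw [hwu, hGu]
            omega
          · by_cases hwv : w = v
            · rw [hwv, hGv]
              omega
            · exact le_of_eq (nbrSum_delete_other G hwu hwv f)
    obtain ⟨g, hgop, hgsum, hgkey⟩ := main
    have hkey : ∀ w, 0 < nbrSum H f w → 0 < nbrSum G g w :=
      fun w hw => lt_of_lt_of_le hw (hgkey w)
    have hmem : (∑ a, g a) ∈ gammaSet G := by
      exact ⟨g, hgop, maj_transfer H G f g hkey hmaj, rfl⟩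
    have := gamma_le G hmem
    omega
  constructor <;> omega
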